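/- Every mixed strategy Q of Monte of the form: θ uniform on {1,2,3} with arbitrary conditional revealing probabilities λ_θ ∈ [0,1] (i.e., Q assigns probability λ_θ/3 to (θ, smaller alternative) and (1−λ_θ)/3 to (θ, larger alternative)) is a minimax strategy: against such Q, every pure strategy of Conie wins with probability at most 2/3. -/

import Mathlib

open Finset

/-- Doors are `Fin 3` (door 1 = 0, door 2 = 1, door 3 = 2). -/
abbrev Door := Fin 3

/-- Monte's pure strategy: a pair (θ, d) with prize door θ and offered door d ≠ θ. -/
abbrev MonteStrat := {p : Door × Door // p.2 ≠ p.1}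

/-- Conie's pure strategy: (x, a, b); `true` = switch, `false` = hold;
`a` is the reaction to the smaller alternative door, `b` to the larger. -/
abbrev ConieStrat := Door × Bool × Bool

/-- The smaller of the two doors different from `x`. -/
def smallerAlt (x : Door) : Door := if x = 0 then 1 else 0

/-- The larger of the two doors different from `x`. -/
def largerAlt (x : Door) : Door := if x = 2 then 1 else 2

/-- Conie's action when offered door `y` (≠ her pick). -/
def act (A : ConieStrat) (y : Door) : Bool :=
  if y = smallerAlt A.1 then A.2.1 else A.2.2

/-- Conie wins iff (mismatch and she switches against the offer θ) or
(match and she holds against the offer d). -/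
def wins (A : ConieStrat) (M : MonteStrat) : Bool :=
  if A.1 = M.val.1 then !(act A M.val.2) else act A M.val.1

/-- The 12×6 payoff matrix entry. -/
noncomputable def payoff (A : ConieStrat) (M : MonteStrat) : ℝ :=
  if wins A M then 1 else 0

/-- `B` weakly dominates `A`. -/
def dominates (B A : ConieStrat) : Prop :=
  (∀ M : MonteStrat, wins A M → wins B M) ∧ ∃ M : MonteStrat, wins B M ∧ ¬ wins A M

/-- Winning probability of pure strategy `A` against mixed strategy `Q` of Monte. -/
noncomputable def winProb (A : ConieStrat) (Q : MonteStrat → ℝ) : ℝ :=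
  ∑ M : MonteStrat, Q M * payoff A M

/-- Marginal probability that the prize is behind door `θ` under `Q`. -/
noncomputable def prizeProb (Q : MonteStrat → ℝ) (θ : Door) : ℝ :=
  ∑ M : MonteStrat, if M.val.1 = θ then Q M else 0

/-- Expected payoff of a mixed profile (P, Q). -/
noncomputable def mixedPay (P : ConieStrat → ℝ) (Q : MonteStrat → ℝ) : ℝ :=
  ∑ A : ConieStrat, ∑ M : MonteStrat, P A * payoff A M * Q M

/-- Conie's uniform always-switching mixed strategy. -/
noncomputable def Pstar : ConieStrat → ℝ := fun A => if A.2.1 = true ∧ A.2.2 = true then 1/3 else 0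

/-- every Monte strategy with uniform prize marginal and arbitrary
revealing biases λ_θ ∈ [0,1] holds every Conie pure strategy to probability ≤ 2/3. -/
theorem stmt10 (lam : Door → ℝ) (hlam : ∀ θ, lam θ ∈ Set.Icc (0:ℝ) 1)
    (Q : MonteStrat → ℝ)
    (hQ : Q = fun M => if M.val.2 = smallerAlt M.val.1 then lam M.val.1 / 3
                       else (1 - lam M.val.1) / 3)
    (A : ConieStrat) : winProb A Q ≤ 2/3 := by
  subst hQ
  have h0 := hlam 0
  have h1 := hlam 1
  have h2 := hlam 2
  simp only [Set.mem_Icc] at h0 h1 h2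
  rw [winProb]
  unfold payoff wins
  rw [← Finset.sum_subtype (p := fun p : Door × Door => p.2 ≠ p.1)
    (Finset.filter (fun p : Door × Door => p.2 ≠ p.1) Finset.univ)
    (by intro x; simp)
    (fun p => (if p.2 = smallerAlt p.1 then lam p.1 / 3 else (1 - lam p.1) / 3) *
      if (if A.1 = p.1 then !act A p.2 else act A p.1) = true then 1 else 0)]
  rw [Finset.sum_filter]
  obtain ⟨x, a, b⟩ := A
  fin_cases x <;> fin_cases a <;> fin_cases b <;>
    simp [payoff, wins, act, smallerAlt, largerAlt, Fintype.sum_prod_type, Fin.sum_univ_succ,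
      show (0:Fin 3) ≠ 1 by decide, show (0:Fin 3) ≠ 2 by decide, show (1:Fin 3) ≠ 0 by decide,
      show (1:Fin 3) ≠ 2 by decide, show (2:Fin 3) ≠ 0 by decide, show (2:Fin 3) ≠ 1 by decide] <;>
    norm_num <;> nlinarith [h0.1,h0.2,h1.1,h1.2,h2.1,h2.2]
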